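/- Let (v₁, …, vₙ) be a basis of a finite-dimensional real vector space V consisting of vectors that are non-isotropic with respect to a symmetric bilinear form B, and let c = s_{v₁} ∘ ⋯ ∘ s_{vₙ}. Then the fixed subspace of c equals the radical of B; in particular cod(Fix(c)) = n − dim(Rad(B)). -/

import Mathlib

/-- The reflection in a non-isotropic vector `v`: `s_v x = x - (2 B(x,v)/B(v,v)) • v`. -/
noncomputable def reflVec {V : Type*} [AddCommGroup V] [Module ℝ V]
    (B : LinearMap.BilinForm ℝ V) (v x : V) : V :=
  x - ((2 * B x v) / B v v) • v

lemma foldr_sub_mem_span {V : Type*} [AddCommGroup V] [Module ℝ V]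
    (B : LinearMap.BilinForm ℝ V) (l : List V) (x : V) :
    ((l.map (reflVec B)).foldr (· ∘ ·) id) x - x ∈ Submodule.span ℝ {w | w ∈ l} := by
  induction l with
  | nil => simp
  | cons u t ih =>
    simp only [List.map_cons, List.foldr_cons, Function.comp_apply]
    set y := ((t.map (reflVec B)).foldr (· ∘ ·) id) x with hy
    have h : reflVec B u y - x = (y - x) + (-((2 * B y u) / B u u)) • u := by
      simp only [reflVec, neg_smul]; abel
    rw [h]
    refine add_mem (Submodule.span_mono ?_ ih)
      (Submodule.smul_mem _ _ (Submodule.subset_span (by simp)))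
    intro w hw; exact List.mem_cons_of_mem _ hw

lemma fix_imp {V : Type*} [AddCommGroup V] [Module ℝ V]
    (B : LinearMap.BilinForm ℝ V) :
    ∀ (l : List V), (∀ u ∈ l, B u u ≠ 0) →
    LinearIndependent ℝ (fun i : Fin l.length => l.get i) →
    ∀ x : V, ((l.map (reflVec B)).foldr (· ∘ ·) id) x = x → ∀ u ∈ l, B x u = 0 := by
  intro l
  induction l with
  | nil => simp
  | cons u t ih =>
    intro hni hli x hx w hw
    have hcons : (fun i : Fin (u :: t).length => (u :: t).get i)
        = Fin.cons u (fun i : Fin t.length => t.get i) := by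
      funext i
      refine Fin.cases ?_ (fun j => ?_) i <;> simp
    rw [hcons, linearIndependent_fin_cons] at hli
    have hrange : Set.range (fun i : Fin t.length => t.get i) = {w | w ∈ t} := by
      ext z; simp [List.mem_iff_get]
    rw [hrange] at hli
    simp only [List.map_cons, List.foldr_cons, Function.comp_apply] at hx
    set y := ((t.map (reflVec B)).foldr (· ∘ ·) id) x with hy
    have hmem : y - x ∈ Submodule.span ℝ {w | w ∈ t} := foldr_sub_mem_span B t x
    have hax : ((2 * B y u) / B u u) • u = y - x := by
      have h1 : y - ((2 * B y u) / B u u) • u = x := hx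
      rw [← h1]; abel
    have ha : (2 * B y u) / B u u = 0 := by
      by_contra hne
      apply hli.2
      have : u = ((2 * B y u) / B u u)⁻¹ • (((2 * B y u) / B u u) • u) := by
        rw [smul_smul, inv_mul_cancel₀ hne, one_smul]
      rw [this, hax]
      exact Submodule.smul_mem _ _ hmem
    have hyx : y = x := by
      have h0 := hax
      rw [ha, zero_smul] at h0
      exact (sub_eq_zero.mp h0.symm)
    rcases List.mem_cons.mp hw with rfl | hwt
    · rw [hyx] at ha
      rcases div_eq_zero_iff.mp ha with h2 | h2
      · linarith
      · exact absurd h2 (hni w (List.mem_cons_self))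
    · exact ih (fun z hz => hni z (List.mem_cons_of_mem _ hz)) hli.1 x hyx w hwt

lemma foldr_fix_of_fix {V : Type*} (x : V) :
    ∀ fs : List (V → V), (∀ f ∈ fs, f x = x) → fs.foldr (· ∘ ·) id x = x := by
  intro fs
  induction fs with
  | nil => simp
  | cons f t ih =>
    intro h
    simp only [List.foldr_cons, Function.comp_apply]
    rw [ih (fun g hg => h g (List.mem_cons_of_mem _ hg)), h f (List.mem_cons_self)]

theorem stmt_2 {V : Type*} [AddCommGroup V] [Module ℝ V] [FiniteDimensional ℝ V]
    (B : LinearMap.BilinForm ℝ V) (hsym : ∀ x y, B x y = B y x)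
    {n : ℕ} (v : Module.Basis (Fin n) ℝ V) (hiso : ∀ i, B (v i) (v i) ≠ 0) :
    {x : V | ((List.ofFn fun i => reflVec B (v i)).foldr (· ∘ ·) id) x = x}
        = (LinearMap.ker B : Set V)
      ∧ Module.finrank ℝ V - Module.finrank ℝ (LinearMap.ker B)
          = n - Module.finrank ℝ (LinearMap.ker B) := by
  have hV : Module.finrank ℝ V = n := by
    rw [Module.finrank_eq_card_basis v, Fintype.card_fin]
  refine ⟨?_, by rw [hV]⟩
  ext x
  simp only [Set.mem_setOf_eq, SetLike.mem_coe, LinearMap.mem_ker]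
  constructor
  · intro hx
    have hl : (((List.ofFn v).map (reflVec B)).foldr (· ∘ ·) id) x = x := by
      rw [List.map_ofFn]; exact hx
    have hni : ∀ u ∈ List.ofFn v, B u u ≠ 0 := by
      intro u hu
      obtain ⟨i, rfl⟩ := List.mem_ofFn.mp hu
      exact hiso i
    have hli : LinearIndependent ℝ
        (fun i : Fin (List.ofFn v).length => (List.ofFn v).get i) := by
      have he : (fun i : Fin (List.ofFn v).length => (List.ofFn v).get i)
          = v ∘ (Fin.cast (List.length_ofFn (f := v))) := by
        funext i; rw [List.get_ofFn]; rfl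
      rw [he]
      exact v.linearIndependent.comp _ (Fin.cast_injective _)
    have key := fix_imp B (List.ofFn v) hni hli x hl
    exact v.ext fun i => by
      simpa using key (v i) (List.mem_ofFn.mpr ⟨i, rfl⟩)
  · intro hx
    apply foldr_fix_of_fix
    intro f hf
    obtain ⟨i, rfl⟩ := List.mem_ofFn.mp hf
    have : B x (v i) = 0 := by rw [hx]; rfl
    simp [reflVec, this]
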